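/- arXiv:2112.05460 — 5 statements merged into one kernel-verified Lean document; each statement's English description precedes it below -/
import Mathlib

section
/- Let T be an n-tournament. Then the following are equivalent: (i) there exists a constant c such that every pair of distinct vertices of T is contained in exactly c directed 3-cycles; (ii) T is transitive or doubly regular. -/
open Polynomial Matrix

/-- An `n`-tournament given by its adjacency matrix: entries in `{0,1}`, zero diagonal,
and `A + Aᵀ = J - I` where `J` is the all-ones matrix. -/
def IsTournament {n : ℕ} (A : Matrix (Fin n) (Fin n) ℚ) : Prop :=
  (∀ i j, A i j = 0 ∨ A i j = 1) ∧ (∀ i, A i i = 0) ∧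
    A + Aᵀ = Matrix.of (fun _ _ => (1 : ℚ)) - 1

/-- Transitivity of the dominance relation. -/
def IsTransitive {n : ℕ} (A : Matrix (Fin n) (Fin n) ℚ) : Prop :=
  ∀ i j k, A i j = 1 → A j k = 1 → A i k = 1

/-- `A` is `k`-spectrally monomorphic: all `k × k` principal submatrices of `A`
have the same characteristic polynomial. -/
def SpecMono {n : ℕ} (k : ℕ) (A : Matrix (Fin n) (Fin n) ℚ) : Prop :=
  ∀ f g : Fin k → Fin n, Function.Injective f → Function.Injective g →
    (A.submatrix f f).charpoly = (A.submatrix g g).charpoly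

/-- `A` is doubly regular: every pair of distinct vertices jointly dominates exactly
`t` vertices, i.e. every off-diagonal entry of `A * Aᵀ` equals `t`. -/
def IsDoublyRegular {n : ℕ} (A : Matrix (Fin n) (Fin n) ℚ) : Prop :=
  ∃ t : ℕ, ∀ i j, i ≠ j → (A * Aᵀ) i j = t

/-- `A` is regular: every row sums to `(n - 1) / 2`. -/
def IsRegularTournament {n : ℕ} (A : Matrix (Fin n) (Fin n) ℚ) : Prop :=
  ∀ i, ∑ j, A i j = ((n : ℚ) - 1) / 2

/-- The out-neighborhood of `x`: vertices dominated by `x`. -/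
def outN {n : ℕ} (A : Matrix (Fin n) (Fin n) ℚ) (x : Fin n) : Finset (Fin n) :=
  Finset.univ.filter (fun z => A x z = 1)

/-- The in-neighborhood of `x`: vertices dominating `x`. -/
def inN {n : ℕ} (A : Matrix (Fin n) (Fin n) ℚ) (x : Fin n) : Finset (Fin n) :=
  Finset.univ.filter (fun z => A z x = 1)

section helpers
variable {n : ℕ} {A : Matrix (Fin n) (Fin n) ℚ}

lemma mem_outN {x z : Fin n} : z ∈ outN A x ↔ A x z = 1 := by simp [outN]

lemma mem_inN {x z : Fin n} : z ∈ inN A x ↔ A z x = 1 := by simp [inN]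

lemma entry_sum (hT : IsTournament A) {i j : Fin n} (hij : i ≠ j) :
    A i j + A j i = 1 := by
  have h := congrFun (congrFun hT.2.2 i) j
  simpa [Matrix.add_apply, Matrix.transpose_apply, Matrix.sub_apply,
    Matrix.one_apply, Matrix.of_apply, hij] using h

lemma ne_of_entry_one (hT : IsTournament A) {i j : Fin n} (h : A i j = 1) : i ≠ j := by
  rintro rfl
  rw [hT.2.1 i] at h
  exact zero_ne_one h

lemma entry_zero_of_one (hT : IsTournament A) {i j : Fin n} (h : A i j = 1) : A j i = 0 := by
  have := entry_sum hT (ne_of_entry_one hT h)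
  linarith

lemma entry_one_of_zero (hT : IsTournament A) {i j : Fin n} (hij : i ≠ j) (h : A i j = 0) :
    A j i = 1 := by
  have := entry_sum hT hij
  linarith

lemma entry_dichotomy (hT : IsTournament A) {i j : Fin n} (hij : i ≠ j) :
    A i j = 1 ∨ A j i = 1 := by
  rcases hT.1 i j with h | h
  · exact Or.inr (entry_one_of_zero hT hij h)
  · exact Or.inl h

lemma card_inter_outN (T : Finset (Fin n)) (y : Fin n) :
    (T ∩ outN A y).card = ∑ z ∈ T, if A y z = 1 then 1 else 0 := by
  rw [← Finset.card_filter]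
  congr 1
  ext z
  simp [outN, Finset.mem_filter, and_comm]

lemma card_inter_inN (S : Finset (Fin n)) (z : Fin n) :
    (S ∩ inN A z).card = ∑ y ∈ S, if A y z = 1 then 1 else 0 := by
  rw [← Finset.card_filter]
  congr 1
  ext y
  simp [inN, Finset.mem_filter, and_comm]

lemma sum_comm_key (S T : Finset (Fin n)) :
    ∑ y ∈ S, (T ∩ outN A y).card = ∑ z ∈ T, (S ∩ inN A z).card := by
  simp_rw [card_inter_outN, card_inter_inN]
  exact Finset.sum_comm

lemma inN_eq_compl (hT : IsTournament A) (x : Fin n) :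
    inN A x = (insert x (outN A x))ᶜ := by
  ext z
  by_cases hz : z = x
  · subst hz; simp [mem_inN, hT.2.1 z]
  · simp only [mem_inN, Finset.mem_compl, Finset.mem_insert, mem_outN]
    constructor
    · intro h1
      push_neg
      refine ⟨hz, ?_⟩
      rw [entry_zero_of_one hT h1]
      exact zero_ne_one
    · intro h
      push_neg at h
      rcases hT.1 x z with h0 | h1
      · exact entry_one_of_zero hT (fun hh => hz hh.symm) h0
      · exact absurd h1 h.2

lemma card_out_in (hT : IsTournament A) (x : Fin n) :
    (outN A x).card + (inN A x).card + 1 = n := by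
  have h2 : (insert x (outN A x)).card = (outN A x).card + 1 := by
    rw [Finset.card_insert_of_notMem]
    simp [mem_outN, hT.2.1 x]
  have h3 : (insert x (outN A x)).card ≤ n := by
    simpa using Finset.card_le_univ (insert x (outN A x))
  rw [inN_eq_compl hT x, Finset.card_compl]
  simp only [Fintype.card_fin]
  omega

lemma edge_partition (hT : IsTournament A) {x y : Fin n} (h1 : A x y = 1) :
    (inN A x ∩ outN A y).card + (outN A x ∩ outN A y).card = (outN A y).card := by
  have hdisj : Disjoint (inN A x ∩ outN A y) (outN A x ∩ outN A y) := by
    rw [Finset.disjoint_left]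
    intro z hz1 hz2
    rw [Finset.mem_inter, mem_inN, mem_outN] at hz1
    rw [Finset.mem_inter, mem_outN] at hz2
    have h0 := entry_zero_of_one hT hz1.1
    rw [h0] at hz2
    exact zero_ne_one hz2.1
  rw [← Finset.card_union_of_disjoint hdisj]
  congr 1
  ext z
  simp only [Finset.mem_union, Finset.mem_inter, mem_inN, mem_outN]
  constructor
  · rintro (⟨_, h⟩ | ⟨_, h⟩) <;> exact h
  · intro hz
    have hzx : z ≠ x := by
      rintro rfl
      rw [entry_zero_of_one hT h1] at hz
      exact zero_ne_one hz
    rcases entry_dichotomy hT hzx with hx | hx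
    · exact Or.inl ⟨hx, hz⟩
    · exact Or.inr ⟨hx, hz⟩

lemma mulT_apply (hT : IsTournament A) (x y : Fin n) :
    (A * Aᵀ) x y = ((outN A x ∩ outN A y).card : ℚ) := by
  rw [Matrix.mul_apply]
  have h : ∀ z, A x z * Aᵀ z y = if z ∈ outN A x ∩ outN A y then (1 : ℚ) else 0 := by
    intro z
    rw [Matrix.transpose_apply]
    simp only [Finset.mem_inter, mem_outN]
    rcases hT.1 x z with h | h <;> rcases hT.1 y z with h' | h' <;> simp [h, h']
  rw [Finset.sum_congr rfl (fun z _ => h z), Finset.sum_ite_mem, Finset.univ_inter,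
    Finset.sum_const, nsmul_eq_mul, mul_one]

lemma inter_out_in_card (hT : IsTournament A) (S : Finset (Fin n)) {y : Fin n} (hy : y ∈ S) :
    (S ∩ outN A y).card + (S ∩ inN A y).card + 1 = S.card := by
  have hdisj : Disjoint (S ∩ outN A y) (S ∩ inN A y) := by
    rw [Finset.disjoint_left]
    intro z hz1 hz2
    rw [Finset.mem_inter, mem_outN] at hz1
    rw [Finset.mem_inter, mem_inN] at hz2
    have h0 := entry_zero_of_one hT hz1.2
    rw [h0] at hz2
    exact zero_ne_one hz2.2
  have hunion : (S ∩ outN A y) ∪ (S ∩ inN A y) = S.erase y := by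
    ext z
    simp only [Finset.mem_union, Finset.mem_inter, mem_outN, mem_inN, Finset.mem_erase]
    constructor
    · rintro (⟨hzS, h⟩ | ⟨hzS, h⟩)
      · exact ⟨Ne.symm (ne_of_entry_one hT h), hzS⟩
      · exact ⟨ne_of_entry_one hT h, hzS⟩
    · rintro ⟨hzy, hzS⟩
      rcases entry_dichotomy hT (Ne.symm hzy) with h | h
      · exact Or.inl ⟨hzS, h⟩
      · exact Or.inr ⟨hzS, h⟩
  have hcard := Finset.card_union_of_disjoint hdisj
  rw [hunion, Finset.card_erase_of_mem hy] at hcard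
  have hpos := Finset.card_pos.mpr ⟨y, hy⟩
  omega

end helpers

theorem stmt_aux (n : ℕ) (A : Matrix (Fin n) (Fin n) ℚ) (hT : IsTournament A) :
    (∃ c : ℕ, ∀ x y : Fin n, x ≠ y → A x y = 1 → (inN A x ∩ outN A y).card = c) ↔
      (IsTransitive A ∨ (∃ t : ℕ, ∀ i j, i ≠ j → (A * Aᵀ) i j = t)) := by
  constructor
  · rintro ⟨c, hc⟩
    by_cases hc0 : c = 0
    · -- no 3-cycles : transitive
      left
      intro i j k hij hjk
      have hij' : i ≠ j := ne_of_entry_one hT hij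
      have hik : i ≠ k := by
        rintro rfl
        have h0 := entry_zero_of_one hT hjk
        rw [h0] at hij
        exact zero_ne_one hij
      by_contra hik1
      have hAki : A k i = 1 := by
        rcases hT.1 i k with h | h
        · exact entry_one_of_zero hT hik h
        · exact absurd h hik1
      have hcard := hc i j hij' hij
      rw [hc0, Finset.card_eq_zero] at hcard
      have hm : k ∈ inN A i ∩ outN A j := by
        rw [Finset.mem_inter, mem_inN, mem_outN]
        exact ⟨hAki, hjk⟩
      rw [hcard] at hm
      exact absurd hm (Finset.notMem_empty k)
    · right
      by_cases hn : n ≤ 1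
      · refine ⟨0, fun i j hij => absurd ?_ hij⟩
        have h1 := i.is_lt
        have h2 := j.is_lt
        exact Fin.ext (by omega)
      · push_neg at hn
        -- regularity
        have hreg : ∀ x : Fin n, 2 * (outN A x).card + 1 = n := by
          intro x
          have hkey := sum_comm_key (A := A) (outN A x) (inN A x)
          have hL : ∑ y ∈ outN A x, (inN A x ∩ outN A y).card = c * (outN A x).card := by
            have h : ∀ y ∈ outN A x, (inN A x ∩ outN A y).card = c := by
              intro y hy
              rw [mem_outN] at hy
              exact hc x y (ne_of_entry_one hT hy) hy
            rw [Finset.sum_congr rfl h, Finset.sum_const, smul_eq_mul, Nat.mul_comm]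
          have hR : ∑ z ∈ inN A x, (outN A x ∩ inN A z).card = c * (inN A x).card := by
            have h : ∀ z ∈ inN A x, (outN A x ∩ inN A z).card = c := by
              intro z hz
              rw [mem_inN] at hz
              rw [Finset.inter_comm]
              exact hc z x (ne_of_entry_one hT hz) hz
            rw [Finset.sum_congr rfl h, Finset.sum_const, smul_eq_mul, Nat.mul_comm]
          have heq : c * (outN A x).card = c * (inN A x).card := by
            rw [← hL, ← hR]; exact hkey
          have h2 := Nat.eq_of_mul_eq_mul_left (Nat.pos_of_ne_zero hc0) heq
          have hio := card_out_in hT x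
          omega
        have hnpos : 0 < n := by omega
        have hdeg : ∀ x : Fin n, (outN A x).card = (outN A (⟨0, hnpos⟩ : Fin n)).card := by
          intro x
          have h1 := hreg x
          have h2 := hreg (⟨0, hnpos⟩ : Fin n)
          omega
        refine ⟨(outN A (⟨0, hnpos⟩ : Fin n)).card - c, fun i j hij => ?_⟩
        rw [mulT_apply hT]
        have hgoal : (outN A i ∩ outN A j).card = (outN A (⟨0, hnpos⟩ : Fin n)).card - c := by
          rcases entry_dichotomy hT hij with h | h
          · have hp := edge_partition hT h
            have hcij := hc i j hij h
            have hd := hdeg j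
            omega
          · have hp := edge_partition hT h
            have hcji := hc j i hij.symm h
            rw [Finset.inter_comm]
            have hd := hdeg i
            omega
        exact_mod_cast hgoal
  · rintro (hTr | ⟨t, ht⟩)
    · refine ⟨0, fun x y hxy h1 => ?_⟩
      rw [Finset.card_eq_zero, Finset.eq_empty_iff_forall_notMem]
      intro z hz
      rw [Finset.mem_inter, mem_inN, mem_outN] at hz
      have hxz := hTr x y z h1 hz.2
      rw [entry_zero_of_one hT hxz] at hz
      exact zero_ne_one hz.1
    · have htA : ∀ i j : Fin n, i ≠ j → (outN A i ∩ outN A j).card = t := by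
        intro i j hij
        have h := ht i j hij
        rw [mulT_apply hT] at h
        exact_mod_cast h
      have hdegB : ∀ x : Fin n, (outN A x).card = 0 ∨ (outN A x).card = 2 * t + 1 := by
        intro x
        set S := outN A x with hS
        have hkey := sum_comm_key (A := A) S S
        have hL : ∑ y ∈ S, (S ∩ outN A y).card = t * S.card := by
          have h : ∀ y ∈ S, (S ∩ outN A y).card = t := by
            intro y hy
            rw [hS, mem_outN] at hy
            exact htA x y (ne_of_entry_one hT hy)
          rw [Finset.sum_congr rfl h, Finset.sum_const, smul_eq_mul, Nat.mul_comm]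
        have hR : ∑ z ∈ S, (S ∩ inN A z).card = t * S.card := by
          rw [← hkey, hL]
        have hsum2 : ∑ y ∈ S, ((S ∩ outN A y).card + (S ∩ inN A y).card + 1)
            = S.card * S.card := by
          rw [Finset.sum_congr rfl (fun y hy => inter_out_in_card hT S hy),
            Finset.sum_const, smul_eq_mul]
        rw [Finset.sum_add_distrib, Finset.sum_add_distrib, hL, hR,
          Finset.sum_const, smul_eq_mul, mul_one] at hsum2
        rcases Nat.eq_zero_or_pos S.card with h0 | hpos
        · exact Or.inl h0
        · right
          have h2 : S.card * (2 * t + 1) = S.card * S.card := by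
            calc S.card * (2 * t + 1) = t * S.card + t * S.card + S.card := by ring
              _ = S.card * S.card := hsum2
          have := Nat.eq_of_mul_eq_mul_left hpos h2
          omega
      have hhead : ∀ x y u v : Fin n, A x y = 1 → A u v = 1 →
          (outN A y).card = 0 → (outN A v).card ≠ 0 → False := by
        intro x y u v hxy huv hy0 hv0
        have hyx : y ≠ x := (ne_of_entry_one hT hxy).symm
        have hyempty : outN A y = ∅ := Finset.card_eq_zero.mp hy0
        have ht0 : t = 0 := by
          have h := htA y x hyx
          rw [hyempty] at h
          simpa using h.symm
        have hvy : v ≠ y := by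
          rintro rfl
          exact hv0 hy0
        have huy : u ≠ y := by
          intro h
          rw [h] at huv
          have hm : v ∈ outN A y := mem_outN.mpr huv
          rw [hyempty] at hm
          exact absurd hm (Finset.notMem_empty v)
        have hAuy : A u y = 1 := by
          rcases hT.1 u y with h | h
          · have h1 := entry_one_of_zero hT huy h
            have hm : u ∈ outN A y := mem_outN.mpr h1
            rw [hyempty] at hm
            exact absurd hm (Finset.notMem_empty u)
          · exact h
        have hAvy : A v y = 1 := by
          rcases hT.1 v y with h | h
          · have h1 := entry_one_of_zero hT hvy h
            have hm : v ∈ outN A y := mem_outN.mpr h1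
            rw [hyempty] at hm
            exact absurd hm (Finset.notMem_empty v)
          · exact h
        have huvne : u ≠ v := ne_of_entry_one hT huv
        have h := htA u v huvne
        rw [ht0] at h
        have hm : y ∈ outN A u ∩ outN A v := by
          rw [Finset.mem_inter]
          exact ⟨mem_outN.mpr hAuy, mem_outN.mpr hAvy⟩
        rw [Finset.card_eq_zero.mp h] at hm
        exact absurd hm (Finset.notMem_empty y)
      have hheads : ∀ x y u v : Fin n, A x y = 1 → A u v = 1 →
          (outN A y).card = (outN A v).card := by
        intro x y u v hxy huv
        rcases hdegB y with h | h <;> rcases hdegB v with h' | h'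
        · rw [h, h']
        · exact (hhead x y u v hxy huv h (by omega)).elim
        · exact (hhead u v x y huv hxy h' (by omega)).elim
        · rw [h, h']
      by_cases hE : ∃ p : Fin n × Fin n, A p.1 p.2 = 1
      · obtain ⟨⟨x0, y0⟩, hxy0⟩ := hE
        refine ⟨(outN A y0).card - t, fun x y hxy h1 => ?_⟩
        have hp := edge_partition hT h1
        have hi := htA x y hxy
        have hd := hheads x y x0 y0 h1 hxy0
        omega
      · push_neg at hE
        exact ⟨0, fun x y hxy h1 => absurd h1 (hE (x, y))⟩

/-- The number of directed 3-cycles through the pair `{x, y}`, where `x` dominates `y`,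
is `|N⁻(x) ∩ N⁺(y)|`. The statement: every pair of distinct vertices lies in the same
number of 3-cycles iff the tournament is transitive or doubly regular. -/
theorem stmt_9 (n : ℕ) (A : Matrix (Fin n) (Fin n) ℚ) (hT : IsTournament A) :
    (∃ c : ℕ, ∀ x y : Fin n, x ≠ y → A x y = 1 → (inN A x ∩ outN A y).card = c) ↔
      (IsTransitive A ∨ IsDoublyRegular A) := by
  exact stmt_aux n A hT
end

section
/- Let T be a regular n-tournament with adjacency matrix A, and for i ∈ {1,...,n} let A_i denote the (n−1)×(n−1) principal submatrix of A obtained by deleting row and column i. Then, as polynomials, P_A(z) = (1/2)·(z − (n−1)/2)·[(n + 2z + 1)·P_{A_i}(z) + (n − 2z − 1)·P_{A_i}(−z−1)], where P_{A_i}(−z−1) denotes the composition of P_{A_i} with the polynomial −z−1. -/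
open Polynomial Matrix

/-- The principal submatrix of `A` obtained by deleting row and column `i`. -/
def deleteVertex {n : ℕ} (A : Matrix (Fin n) (Fin n) ℚ) (i : Fin n) :
    Matrix {x : Fin n // x ≠ i} {x : Fin n // x ≠ i} ℚ :=
  A.submatrix (fun x => (x : Fin n)) (fun x => (x : Fin n))


section Stmt11Aux
variable {m : Type*} [Fintype m] [DecidableEq m]

lemma eval_charpoly' (W : Matrix m m ℚ) (t : ℚ) :
    (W.charpoly).eval t = (t • (1 : Matrix m m ℚ) - W).det := by
  rw [Matrix.charpoly, ← Polynomial.coe_evalRingHom, RingHom.map_det]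
  congr 1
  ext x y
  by_cases h : x = y <;>
    simp [charmatrix_apply, h, Matrix.one_apply, Matrix.smul_apply, Matrix.sub_apply]

end Stmt11Aux


def complEquiv {m : Type*} [DecidableEq m] (i : m) : ({x : m // x ≠ i} ⊕ Unit) ≃ m where
  toFun := Sum.elim Subtype.val (fun _ => i)
  invFun := fun x => if h : x = i then Sum.inr () else Sum.inl ⟨x, h⟩
  left_inv := by
    rintro (⟨x, hx⟩ | u)
    · simp [hx]
    · simp
  right_inv := by
    intro x
    by_cases h : x = i <;> simp [h]

lemma adj_diag' {m : Type*} [Fintype m] [DecidableEq m] (W : Matrix m m ℚ) (i : m) :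
    W.adjugate i i =
      (W.submatrix (Subtype.val : {x : m // x ≠ i} → m) Subtype.val).det := by
  rw [Matrix.adjugate_apply]
  set W₁ := W.updateRow i (Pi.single i 1) with hW₁
  have hcol : (fun k => W₁ k i) = Pi.single i 1 + fun k => if k = i then 0 else W k i := by
    funext k
    by_cases h : k = i
    · subst h; simp [hW₁, Matrix.updateRow_self]
    · simp [hW₁, Matrix.updateRow_ne h, Pi.single_eq_of_ne h, h]
  have h1 : W₁.det = (W₁.updateCol i (Pi.single i 1)).det := by
    conv_lhs => rw [← Matrix.updateCol_eq_self W₁ i, hcol,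
      Matrix.det_updateCol_add]
    have hz : (W₁.updateCol i fun k => if k = i then 0 else W k i).det = 0 := by
      apply Matrix.det_eq_zero_of_row_eq_zero i
      intro j
      by_cases h : j = i
      · subst h; simp [Matrix.updateCol_self]
      · rw [Matrix.updateCol_ne h]
        simp [hW₁, Matrix.updateRow_self, Pi.single_eq_of_ne h]
    rw [hz, add_zero]
  rw [h1]
  set W₂ := W₁.updateCol i (Pi.single i 1) with hW₂
  have h2 : W₂.submatrix (complEquiv i) (complEquiv i) =
      Matrix.fromBlocks
        (W.submatrix (Subtype.val : {x : m // x ≠ i} → m) Subtype.val) 0 0 1 := by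
    ext a b
    cases a with
    | inl x =>
      cases b with
      | inl y =>
        simp only [Matrix.submatrix_apply, complEquiv, Equiv.coe_fn_mk, Sum.elim_inl,
          Matrix.fromBlocks_apply₁₁]
        rw [hW₂, Matrix.updateCol_ne y.2, hW₁, Matrix.updateRow_ne x.2]
      | inr y =>
        simp only [Matrix.submatrix_apply, complEquiv, Equiv.coe_fn_mk, Sum.elim_inl,
          Sum.elim_inr, Matrix.fromBlocks_apply₁₂, Matrix.zero_apply]
        rw [hW₂, Matrix.updateCol_self, Pi.single_eq_of_ne x.2]
    | inr x =>
      cases b with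
      | inl y =>
        simp only [Matrix.submatrix_apply, complEquiv, Equiv.coe_fn_mk, Sum.elim_inl,
          Sum.elim_inr, Matrix.fromBlocks_apply₂₁, Matrix.zero_apply]
        rw [hW₂, Matrix.updateCol_ne y.2, hW₁, Matrix.updateRow_self]
        exact Pi.single_eq_of_ne y.2 1
      | inr y =>
        simp only [Matrix.submatrix_apply, complEquiv, Equiv.coe_fn_mk, Sum.elim_inr,
          Matrix.fromBlocks_apply₂₂]
        rw [hW₂, Matrix.updateCol_self, Pi.single_eq_same]
        simp [Matrix.one_apply]
  rw [← Matrix.det_submatrix_equiv_self (complEquiv i) W₂, h2,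
    Matrix.det_fromBlocks_zero₂₁, Matrix.det_one, mul_one]

theorem stmt_11 (n : ℕ) (A : Matrix (Fin n) (Fin n) ℚ)
    (hT : IsTournament A) (hR : IsRegularTournament A) (i : Fin n) :
    A.charpoly =
      C (1 / 2 : ℚ) * (X - C (((n : ℚ) - 1) / 2)) *
        ((C (n : ℚ) + 2 * X + 1) * (deleteVertex A i).charpoly +
          (C (n : ℚ) - 2 * X - 1) * ((deleteVertex A i).charpoly.comp (-X - 1))) := by
  have adj_diag : ∀ (W : Matrix (Fin n) (Fin n) ℚ),
      W.adjugate i i =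
        (W.submatrix (Subtype.val : {x : Fin n // x ≠ i} → Fin n) Subtype.val).det :=
    fun W => adj_diag' W i
  obtain ⟨h01, hdiag, hsum⟩ := hT
  set c : ℚ := ((n : ℚ) - 1) / 2 with hc
  set JJ : Matrix (Fin n) (Fin n) ℚ := Matrix.of (fun _ _ => (1 : ℚ)) with hJJdef
  -- column sums
  have hcol : ∀ b, ∑ k, A k b = c := by
    intro b
    have h1 : ∀ k, A k b + A b k = (JJ - 1) k b := by
      intro k
      have := congrFun (congrFun hsum k) b
      simpa [Matrix.transpose_apply] using this
    have h2 : (∑ k, A k b) + (∑ k, A b k) = ∑ k, ((JJ - 1) k b) := by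
      rw [← Finset.sum_add_distrib]
      exact Finset.sum_congr rfl fun k _ => h1 k
    have h3 : ∑ k, ((JJ - 1) k b) = (n : ℚ) - 1 := by
      simp [hJJdef, Matrix.sub_apply, Matrix.one_apply, Finset.sum_sub_distrib,
        Finset.sum_ite_eq]
    rw [hR b, h3] at h2
    rw [hc]; linarith
  -- n is odd
  obtain ⟨mo, hmo⟩ : ∃ mo : ℕ, n = 2 * mo + 1 := by
    have hex : ∀ j, ∃ k : ℕ, A i j = k := by
      intro j; rcases h01 i j with h | h
      · exact ⟨0, by simp [h]⟩
      · exact ⟨1, by simp [h]⟩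
    choose f hf using hex
    have hs : (∑ j, A i j) = ((∑ j, f j : ℕ) : ℚ) := by
      push_cast
      exact Finset.sum_congr rfl fun j _ => hf j
    rw [hR i] at hs
    refine ⟨∑ j, f j, ?_⟩
    have hn : (n : ℚ) = 2 * ((∑ j, f j : ℕ) : ℚ) + 1 := by linarith
    exact_mod_cast hn
  -- reduce to evaluation at infinitely many points
  apply Polynomial.eq_of_infinite_eval_eq
  have hbad : ((X - C c) * (X - C (c - n)) * A.charpoly) ≠ 0 :=
    mul_ne_zero (mul_ne_zero (X_sub_C_ne_zero c) (X_sub_C_ne_zero _))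
      A.charpoly_monic.ne_zero
  have hinf : {x : ℚ | ¬((X - C c) * (X - C (c - n)) * A.charpoly).IsRoot x}.Infinite := by
    have h := (Polynomial.finite_setOf_isRoot hbad).infinite_compl
    convert h using 1
    ext x; simp
  apply hinf.mono
  intro t ht
  simp only [Set.mem_setOf_eq, IsRoot.def, eval_mul, eval_sub, eval_C, eval_X,
    mul_eq_zero, not_or] at ht
  obtain ⟨⟨hu0, hun0⟩, hD0⟩ := ht
  simp only [Set.mem_setOf_eq]
  -- notation
  set u : ℚ := t - c with hu
  have hun : u + n ≠ 0 := by
    intro h; apply hun0; rw [hu] at h; linarith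
  set M : Matrix (Fin n) (Fin n) ℚ := t • 1 - A with hM
  set K : Matrix (Fin n) (Fin n) ℚ := (-t - 1) • 1 - A with hK
  have hDne : M.det ≠ 0 := by
    rw [eval_charpoly'] at hD0; exact hD0
  have hDu : IsUnit M.det := isUnit_iff_ne_zero.mpr hDne
  set D : ℚ := M.det with hD
  -- row and column sum facts
  have hMJ : M * JJ = u • JJ := by
    ext a b
    simp only [Matrix.mul_apply, hJJdef, Matrix.of_apply, mul_one, Matrix.smul_apply,
      smul_eq_mul, hM, Matrix.sub_apply, Matrix.smul_apply, Matrix.one_apply]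
    rw [Finset.sum_sub_distrib]
    simp [Finset.sum_ite_eq, hR a, hu]
    exact hc.symm
  have hJM : JJ * M = u • JJ := by
    ext a b
    simp only [Matrix.mul_apply, hJJdef, Matrix.of_apply, one_mul, Matrix.smul_apply,
      smul_eq_mul, hM, Matrix.sub_apply, Matrix.smul_apply, Matrix.one_apply]
    rw [Finset.sum_sub_distrib]
    simp [Finset.sum_ite_eq', hcol b, hu]
  have hJJ : JJ * JJ = (n : ℚ) • JJ := by
    ext a b
    simp [Matrix.mul_apply, hJJdef, Finset.sum_const, Finset.card_univ]
  have hMr : M * M⁻¹ = 1 := Matrix.mul_nonsing_inv _ hDu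
  have hMl : M⁻¹ * M = 1 := Matrix.nonsing_inv_mul _ hDu
  have hMinvJ : M⁻¹ * JJ = u⁻¹ • JJ := by
    have h := congrArg (fun X => M⁻¹ * X) hMJ
    simp only [← Matrix.mul_assoc, hMl, Matrix.one_mul, Matrix.mul_smul] at h
    calc M⁻¹ * JJ = u⁻¹ • (u • (M⁻¹ * JJ)) := by
          rw [smul_smul, inv_mul_cancel₀ hu0, one_smul]
      _ = u⁻¹ • JJ := by rw [← h]
  have hJMinv : JJ * M⁻¹ = u⁻¹ • JJ := by
    have h := congrArg (fun X => X * M⁻¹) hJM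
    simp only [Matrix.mul_assoc, hMr, Matrix.mul_one, Matrix.smul_mul] at h
    calc JJ * M⁻¹ = u⁻¹ • (u • (JJ * M⁻¹)) := by
          rw [smul_smul, inv_mul_cancel₀ hu0, one_smul]
      _ = u⁻¹ • JJ := by rw [← h]
  set V : Matrix (Fin n) (Fin n) ℚ := M⁻¹ - (u * (u + n))⁻¹ • JJ with hVdef
  have hV : (M + JJ) * V = 1 := by
    have expand : (M + JJ) * V =
        1 + (u⁻¹ - (u * (u + n))⁻¹ * u - (u * (u + n))⁻¹ * n) • JJ := by
      simp only [hVdef, Matrix.add_mul, Matrix.mul_sub, Matrix.mul_smul, hMr, hMJ,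
        hJMinv, hJJ, smul_smul]
      module
    rw [expand]
    have hco : u⁻¹ - (u * (u + n))⁻¹ * u - (u * (u + n))⁻¹ * n = 0 := by
      field_simp
      ring
    rw [hco, zero_smul, add_zero]
  have hV' : V * (M + JJ) = 1 := mul_eq_one_comm.mp hV
  have hMJdet : (M + JJ).det = D * (1 + u⁻¹ * n) := by
    have h1 : M + JJ = M * (1 + u⁻¹ • JJ) := by
      rw [Matrix.mul_add, Matrix.mul_one, Matrix.mul_smul, hMJ, smul_smul,
        inv_mul_cancel₀ hu0, one_smul]
    rw [h1, Matrix.det_mul, ← hD]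
    congr 1
    have h2 : (1 : Matrix (Fin n) (Fin n) ℚ) + u⁻¹ • JJ =
        1 + Matrix.replicateCol Unit (fun _ => u⁻¹) * Matrix.replicateRow Unit (fun _ => (1 : ℚ)) := by
      congr 1
      ext a b
      simp [hJJdef, Matrix.mul_apply]
    rw [h2, Matrix.det_one_add_replicateCol_mul_replicateRow]
    simp [dotProduct, Finset.sum_const, Finset.card_univ, mul_comm]
  have hadjMJ : (M + JJ).adjugate = (M + JJ).det • V := by
    rw [← Matrix.one_mul ((M + JJ).adjugate), ← hV', Matrix.mul_assoc,
      Matrix.mul_adjugate, Matrix.mul_smul, Matrix.mul_one]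
  have hadjM : M.adjugate = D • M⁻¹ := by
    rw [← Matrix.one_mul M.adjugate, ← hMl, Matrix.mul_assoc, Matrix.mul_adjugate,
      Matrix.mul_smul, Matrix.mul_one, hD]
  -- K = -(M + JJ)ᵀ
  have hKM : K = (-1 : ℚ) • (M + JJ)ᵀ := by
    ext a b
    have hent := congrFun (congrFun hsum a) b
    simp only [Matrix.add_apply, Matrix.transpose_apply, Matrix.of_apply,
      Matrix.sub_apply, Matrix.one_apply] at hent
    simp only [hK, hM, Matrix.smul_apply, Matrix.transpose_apply, Matrix.add_apply,
      Matrix.sub_apply, Matrix.smul_apply, Matrix.one_apply, hJJdef, Matrix.of_apply,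
      smul_eq_mul]
    rw [hJJdef] at hent
    simp only [Matrix.of_apply] at hent
    by_cases h : a = b
    · subst h
      simp only [if_pos rfl] at hent ⊢
      linarith [hdiag a, hent]
    · have h' : ¬ b = a := fun hh => h hh.symm
      simp only [if_neg h, if_neg h'] at hent ⊢
      linarith [hent]
  have hadjK : K.adjugate i i = (M + JJ).adjugate i i := by
    rw [hKM, Matrix.adjugate_smul]
    have hcard : Fintype.card (Fin n) = n := Fintype.card_fin n
    rw [hcard]
    have hev : ((-1 : ℚ)) ^ (n - 1) = 1 := by
      have h2 : n - 1 = 2 * mo := by omega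
      rw [h2]
      exact Even.neg_one_pow ⟨mo, by ring⟩
    rw [hev, one_smul, ← Matrix.adjugate_transpose, Matrix.transpose_apply]
  -- submatrix facts
  have hsub : ∀ s : ℚ, (s • (1 : Matrix (Fin n) (Fin n) ℚ) - A).submatrix
      (Subtype.val : {x : Fin n // x ≠ i} → Fin n) Subtype.val
      = s • 1 - deleteVertex A i := by
    intro s
    ext a b
    by_cases h : a = b
    · subst h
      simp [deleteVertex, Matrix.one_apply]
    · have h' : (a : Fin n) ≠ (b : Fin n) := fun hh => h (Subtype.ext hh)
      simp [deleteVertex, Matrix.one_apply, h, h']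
  -- evaluations of the minor charpoly
  have hd : (deleteVertex A i).charpoly.eval t = D * M⁻¹ i i := by
    rw [eval_charpoly', ← hsub t, ← adj_diag, ← hM, hadjM, Matrix.smul_apply, smul_eq_mul]
  have he : (deleteVertex A i).charpoly.eval (-t - 1) =
      D * (1 + u⁻¹ * n) * (M⁻¹ i i - (u * (u + n))⁻¹) := by
    rw [eval_charpoly', ← hsub (-t - 1), ← adj_diag, ← hK, hadjK, hadjMJ,
      Matrix.smul_apply, hMJdet, smul_eq_mul]
    congr 1
    simp [hVdef, Matrix.sub_apply, Matrix.smul_apply, hJJdef]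
  -- final computation
  rw [eval_charpoly', ← hM, ← hD]
  simp only [eval_mul, eval_add, eval_sub, eval_C, eval_X, eval_one, eval_comp,
    eval_neg, eval_ofNat, hd, he]
  have hn2 : (n : ℚ) = 2 * c + 1 := by rw [hc]; ring
  have hut : t = u + c := by rw [hu]; ring
  have hun' : u + (2 * c + 1) ≠ 0 := by rw [← hn2]; exact hun
  rw [hn2, hut]
  field_simp
  ring
end

section
/- Let n ≥ 4 and let R_n be the tournament on vertices v_1, ..., v_n obtained from the transitive tournament (v_i dominates v_j iff i < j) by reversing the arc from v_1 to v_n, with adjacency matrix A. Then the characteristic polynomial of A is z^n − Σ_{k=3}^{n} C(n−2, k−2) z^{n−k}. -/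
open Polynomial Matrix

section Aux

variable {R : Type*} [CommRing R] (z : R)

def Emat (m : ℕ) : Matrix (Fin (m+1)) (Fin (m+1)) R :=
  fun a b => if a.val = b.val + 1 then z else if a.val ≤ b.val then -1 else 0

def Bmat (m : ℕ) : Matrix (Fin (m+1)) (Fin (m+1)) R :=
  fun a b => if a.val = b.val + 1 then z
    else if a.val ≤ b.val then (if a.val = 0 ∧ b.val = m then 0 else -1) else 0

lemma succAbove_one_val {m : ℕ} (a : Fin (m+1)) :
    (((1 : Fin (m+2)).succAbove a) : ℕ) = if a.val < 1 then a.val else a.val + 1 := by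
  rcases Nat.lt_or_ge a.val 1 with h | h
  · rw [Fin.succAbove_of_castSucc_lt, if_pos h]
    · simp
    · simp [Fin.lt_iff_val_lt_val, h]
  · rw [Fin.succAbove_of_le_castSucc, if_neg (Nat.not_lt.mpr h)]
    · simp
    · simp [Fin.le_iff_val_le_val]
      omega

lemma Emat_sub0 (m : ℕ) :
    (Emat z (m+1)).submatrix ((0 : Fin (m+2)).succAbove) Fin.succ = Emat z m := by
  ext a b
  have ha := a.isLt
  have hb := b.isLt
  simp only [Matrix.submatrix_apply, Fin.succAbove_zero, Emat, Fin.val_succ]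
  split_ifs <;> first | rfl | omega | simp_all

lemma Emat_sub1 (m : ℕ) :
    (Emat z (m+1)).submatrix ((1 : Fin (m+2)).succAbove) Fin.succ = Emat z m := by
  ext a b
  have ha := a.isLt
  have hb := b.isLt
  simp only [Matrix.submatrix_apply, Emat, Fin.val_succ, succAbove_one_val]
  rcases Nat.lt_or_ge a.val 1 with h | h
  · rw [if_pos h]
    split_ifs <;> first | rfl | omega | simp_all
  · rw [if_neg (Nat.not_lt.mpr h)]
    split_ifs <;> first | rfl | omega | simp_all

lemma Bmat_sub0 (m : ℕ) :
    (Bmat z (m+1)).submatrix ((0 : Fin (m+2)).succAbove) Fin.succ = Emat z m := by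
  ext a b
  have ha := a.isLt
  have hb := b.isLt
  simp only [Matrix.submatrix_apply, Fin.succAbove_zero, Bmat, Emat, Fin.val_succ]
  split_ifs <;> first | rfl | omega | simp_all

lemma Bmat_sub1 (m : ℕ) :
    (Bmat z (m+1)).submatrix ((1 : Fin (m+2)).succAbove) Fin.succ = Bmat z m := by
  ext a b
  have ha := a.isLt
  have hb := b.isLt
  simp only [Matrix.submatrix_apply, Bmat, Fin.val_succ, succAbove_one_val]
  rcases Nat.lt_or_ge a.val 1 with h | h
  · rw [if_pos h]
    split_ifs <;> first | rfl | omega | simp_all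
  · rw [if_neg (Nat.not_lt.mpr h)]
    split_ifs <;> first | rfl | omega | simp_all

lemma det_Emat : ∀ m : ℕ, (Emat z m).det = (-1)^(m+1) * (1+z)^m := by
  intro m
  induction m with
  | zero =>
    rw [Matrix.det_fin_one]
    simp [Emat]
  | succ m ih =>
    rw [Matrix.det_succ_column_zero, Fin.sum_univ_succ, Fin.sum_univ_succ,
      Fin.succ_zero_eq_one]
    have h0 : Emat z (m+1) 0 0 = -1 := by
      simp only [Emat, Fin.val_zero]
      norm_num
    have h1 : Emat z (m+1) 1 0 = z := by
      simp [Emat, Fin.val_zero, Fin.val_one]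
    have hrest : ∀ i : Fin m, Emat z (m+1) i.succ.succ 0 = 0 := by
      intro i
      simp only [Emat, Fin.val_zero, Fin.val_succ]
      split_ifs <;> first | rfl | omega | simp_all
    rw [Emat_sub0, Emat_sub1, h0, h1,
      Finset.sum_eq_zero (fun i _ => by rw [hrest]; ring), ih]
    simp only [Fin.val_zero, Fin.val_one]
    ring

lemma det_Bmat : ∀ m : ℕ, (Bmat z m).det = (-1)^m * (z^m - (1+z)^m) := by
  intro m
  induction m with
  | zero =>
    rw [Matrix.det_fin_one]
    simp [Bmat]
  | succ m ih =>
    rw [Matrix.det_succ_column_zero, Fin.sum_univ_succ, Fin.sum_univ_succ,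
      Fin.succ_zero_eq_one]
    have h0 : Bmat z (m+1) 0 0 = -1 := by
      simp only [Bmat, Fin.val_zero]
      norm_num
    have h1 : Bmat z (m+1) 1 0 = z := by
      simp [Bmat, Fin.val_zero, Fin.val_one]
    have hrest : ∀ i : Fin m, Bmat z (m+1) i.succ.succ 0 = 0 := by
      intro i
      simp only [Bmat, Fin.val_zero, Fin.val_succ]
      split_ifs <;> first | rfl | omega | simp_all
    rw [Bmat_sub0, Bmat_sub1, h0, h1,
      Finset.sum_eq_zero (fun i _ => by rw [hrest]; ring), ih, det_Emat]
    simp only [Fin.val_zero, Fin.val_one]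
    ring

end Aux


theorem stmt_15 (n : ℕ) (hn : 4 ≤ n) (A : Matrix (Fin n) (Fin n) ℚ)
    (hA : ∀ i j : Fin n,
      A i j = if (i.val < j.val ∧ ¬(i.val = 0 ∧ j.val = n - 1)) ∨
          (i.val = n - 1 ∧ j.val = 0) then 1 else 0) :
    A.charpoly =
      X ^ n - ∑ k ∈ Finset.Icc 3 n, C (((n - 2).choose (k - 2) : ℚ)) * X ^ (n - k) := by
  obtain ⟨m, rfl⟩ : ∃ m, n = m + 4 := ⟨n - 4, by omega⟩
  have hA' : ∀ i j : Fin (m+4),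
      A i j = if (i.val < j.val ∧ ¬(i.val = 0 ∧ j.val = m + 3)) ∨
          (i.val = m + 3 ∧ j.val = 0) then 1 else 0 := hA
  have hcp : A.charpoly = (charmatrix A).det := rfl
  have hexp := Matrix.det_succ_row (charmatrix A) (Fin.last (m+3))
  rw [Fin.sum_univ_succ, Fin.sum_univ_castSucc] at hexp
  have hmid : ∀ j : Fin (m+2),
      charmatrix A (Fin.last (m+3)) (j.castSucc.succ) = 0 := by
    intro j
    have hj := j.isLt
    have hne : (Fin.last (m+3)) ≠ j.castSucc.succ := by
      intro h
      have h2 := congrArg Fin.val h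
      simp only [Fin.val_last, Fin.val_succ, Fin.coe_castSucc] at h2
      omega
    rw [Matrix.charmatrix_apply_ne _ _ _ hne, hA']
    rw [if_neg (by
      simp only [Fin.val_last, Fin.val_succ, Fin.coe_castSucc]
      omega)]
    simp
  have hB : (charmatrix A).submatrix (Fin.last (m+3)).succAbove
      ((0 : Fin (m+4)).succAbove) = Bmat X (m+2) := by
    refine Matrix.ext fun a b => ?_
    have ha := a.isLt
    have hb := b.isLt
    rw [Matrix.submatrix_apply, Fin.succAbove_last, Fin.succAbove_zero]
    rcases eq_or_ne (a.castSucc : Fin (m+4)) b.succ with hd | hd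
    · have hv : (a : ℕ) = (b : ℕ) + 1 := by
        have h2 := congrArg Fin.val hd
        simpa using h2
      rw [hd, Matrix.charmatrix_apply_eq, hA']
      rw [if_neg (by simp only [Fin.val_succ]; omega)]
      simp only [Bmat]
      rw [if_pos hv]
      simp
    · have hv : (a : ℕ) ≠ (b : ℕ) + 1 := by
        intro h
        exact hd (Fin.ext (by simpa using h))
      rw [Matrix.charmatrix_apply_ne _ _ _ hd, hA']
      simp only [Bmat, Fin.coe_castSucc, Fin.val_succ]
      by_cases hab : (a : ℕ) ≤ (b : ℕ)
      · by_cases hexc : (a : ℕ) = 0 ∧ (b : ℕ) = m + 2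
        · rw [if_neg (by omega), if_neg hv, if_pos hab, if_pos hexc]
          simp
        · rw [if_pos (by omega), if_neg hv, if_pos hab, if_neg hexc]
          simp
      · rw [if_neg (by omega), if_neg hv, if_neg hab]
        simp
  have hT : ((charmatrix A).submatrix (Fin.last (m+3)).succAbove
      ((Fin.last (m+3)).succAbove)).det = X ^ (m+3) := by
    rw [Fin.succAbove_last]
    have htri : ((charmatrix A).submatrix Fin.castSucc
        (Fin.castSucc : Fin (m+3) → Fin (m+4))).BlockTriangular id := by
      intro i j hij
      have hij' : (j : ℕ) < (i : ℕ) := hij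
      have hi := i.isLt
      have hne : (i.castSucc : Fin (m+4)) ≠ j.castSucc := by
        intro h
        have h2 := congrArg Fin.val h
        simp only [Fin.coe_castSucc] at h2
        omega
      rw [Matrix.submatrix_apply, Matrix.charmatrix_apply_ne _ _ _ hne, hA']
      rw [if_neg (by simp only [Fin.coe_castSucc]; omega)]
      simp
    rw [Matrix.det_of_upperTriangular htri]
    have hdiag : ∀ i : Fin (m+3),
        ((charmatrix A).submatrix Fin.castSucc
          (Fin.castSucc : Fin (m+3) → Fin (m+4))) i i = X := by
      intro i
      have hi := i.isLt
      rw [Matrix.submatrix_apply, Matrix.charmatrix_apply_eq, hA']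
      rw [if_neg (by simp only [Fin.coe_castSucc]; omega)]
      simp
    rw [Finset.prod_congr rfl (fun i _ => hdiag i)]
    simp [Finset.prod_const, Finset.card_univ]
  have hl0 : charmatrix A (Fin.last (m+3)) 0 = -1 := by
    have hne : (Fin.last (m+3)) ≠ (0 : Fin (m+4)) := by
      intro h
      have h2 := congrArg Fin.val h
      simp only [Fin.val_last, Fin.val_zero] at h2
      omega
    rw [Matrix.charmatrix_apply_ne _ _ _ hne, hA']
    split_ifs with h
    · simp
    · exact absurd (Or.inr ⟨Fin.val_last _, rfl⟩) h
  have hll : charmatrix A (Fin.last (m+3)) (Fin.last (m+3)) = X := by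
    rw [Matrix.charmatrix_apply_eq, hA']
    rw [if_neg (by simp only [Fin.val_last]; omega)]
    simp
  have hdetB : (Bmat (X : ℚ[X]) (m+2)).det
      = (-1)^(m+2) * (X^(m+2) - (1+X)^(m+2)) := det_Bmat X (m+2)
  have hdet : (charmatrix A).det = X^(m+4) + X^(m+2) - (1+X)^(m+2) := by
    rw [hexp, Finset.sum_eq_zero (fun j _ => by rw [hmid j]; ring)]
    have hlast : (Fin.last (m+2)).succ = Fin.last (m+3) := rfl
    rw [hlast, hB, hll, hl0, hdetB, hT]
    simp only [Fin.val_last, Fin.val_zero]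
    have eA : ((-1 : ℚ[X]))^(m+3) * -1 * (-1)^(m+2) = 1 := by
      rw [show ((-1:ℚ[X]))^(m+3) * -1 * (-1)^(m+2)
          = (-1)^(m+3) * ((-1)^(m+2) * (-1)^1) from by ring]
      rw [← pow_add, ← pow_add]
      exact Even.neg_one_pow ⟨m+3, by omega⟩
    have e2 : ((-1 : ℚ[X]))^(m+3+(m+3)) = 1 := Even.neg_one_pow ⟨m+3, by omega⟩
    linear_combination (X^(m+2) - (1+X)^(m+2)) * eA + (X * X^(m+3)) * e2
  have hsum : ∑ k ∈ Finset.Icc 3 (m+4), C (((m+2).choose (k - 2) : ℚ)) * X ^ (m+4-k)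
      = (1+X)^(m+2) - X^(m+2) := by
    have hap := add_pow (X : ℚ[X]) 1 (m+2)
    rw [Finset.sum_range_succ] at hap
    simp only [one_pow, mul_one, Nat.choose_self, Nat.cast_one] at hap
    have hre : ∑ k ∈ Finset.Icc 3 (m+4), C (((m+2).choose (k - 2) : ℚ)) * X ^ (m+4-k)
        = ∑ j ∈ Finset.range (m+2), X ^ j * (((m+2).choose j : ℚ[X])) := by
      refine Finset.sum_bij' (fun k _ => m + 4 - k) (fun j _ => m + 4 - j) ?_ ?_ ?_ ?_ ?_
      · intro k hk
        simp only [Finset.mem_Icc] at hk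
        simp only [Finset.mem_range]
        omega
      · intro j hj
        simp only [Finset.mem_range] at hj
        simp only [Finset.mem_Icc]
        omega
      · intro k hk
        simp only [Finset.mem_Icc] at hk
        show m + 4 - (m + 4 - k) = k
        omega
      · intro j hj
        simp only [Finset.mem_range] at hj
        show m + 4 - (m + 4 - j) = j
        omega
      · intro k hk
        simp only [Finset.mem_Icc] at hk
        have h1 : m + 4 - k = (m+2) - (k-2) := by omega
        have h2 : k - 2 ≤ m + 2 := by omega
        have h3 : (m+2).choose (m+4-k) = (m+2).choose (k-2) := by
          rw [h1, Nat.choose_symm h2]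
        show C (((m+2).choose (k-2) : ℚ)) * X ^ (m+4-k)
            = X ^ (m+4-k) * (((m+2).choose (m+4-k) : ℚ[X]))
        rw [h3, ← Polynomial.C_eq_natCast]
        ring
    rw [hre]
    have hx : ((1:ℚ[X])+X)^(m+2) = (X+1)^(m+2) := by ring
    rw [hx, hap]
    ring
  rw [hcp, hdet]
  have h2 : m + 4 - 2 = m + 2 := rfl
  rw [h2, hsum]
  ring
end

section
/- Let n ≥ 4 and let R_n be the tournament obtained from the transitive tournament on v_1, ..., v_n (v_i dominates v_j iff i < j) by reversing the arc from v_1 to v_n. Then R_n is (n−1)-skew-spectrally monomorphic but not (n−1)-spectrally monomorphic. -/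
open Polynomial Matrix

/-- A tournament with adjacency matrix `A` is `k`-skew-spectrally monomorphic if all
`k × k` principal submatrices of its skew-adjacency matrix `S = A - Aᵀ` have the same
characteristic polynomial. -/
def SkewSpecMono {n : ℕ} (k : ℕ) (A : Matrix (Fin n) (Fin n) ℚ) : Prop :=
  ∀ f g : Fin k → Fin n, Function.Injective f → Function.Injective g →
    ((A - Aᵀ).submatrix f f).charpoly = ((A - Aᵀ).submatrix g g).charpoly

/- ### Auxiliary development -/

def condT (N : ℕ) (i j : Fin N) : Prop :=
  (i.val < j.val ∧ ¬(i.val = 0 ∧ j.val = N - 1)) ∨ (i.val = N - 1 ∧ j.val = 0)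

instance (N : ℕ) (i j : Fin N) : Decidable (condT N i j) := by
  unfold condT; infer_instance

attribute [reducible] condT

def RA (N : ℕ) : Matrix (Fin N) (Fin N) ℚ :=
  Matrix.of fun i j => if condT N i j then 1 else 0

def Ts (N : ℕ) : Matrix (Fin N) (Fin N) ℚ :=
  Matrix.of fun i j => if i.val < j.val then 1 else if j.val < i.val then -1 else 0

def RS (N : ℕ) : Matrix (Fin N) (Fin N) ℚ := RA N - (RA N)ᵀ

lemma charpoly_conj_invol {k : ℕ} (D N : Matrix (Fin k) (Fin k) ℚ) (hD : D * D = 1) :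
    (D * N * D).charpoly = N.charpoly := by
  unfold Matrix.charpoly
  have hDC : D.map C * D.map C = 1 := by
    rw [← Matrix.map_mul, hD]; simp
  have hcomm : ∀ (M : Matrix (Fin k) (Fin k) ℚ[X]),
      M * diagonal (fun _ => X) = diagonal (fun _ => X) * M := by
    intro M; ext i j
    simp [Matrix.mul_diagonal, Matrix.diagonal_mul, mul_comm]
  have h1 : charmatrix (D * N * D) = D.map C * charmatrix N * D.map C := by
    unfold charmatrix
    rw [mul_sub, sub_mul]
    congr 1
    · rw [Matrix.scalar_apply, hcomm, mul_assoc, hDC, mul_one]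
    · simp [RingHom.mapMatrix_apply, ← Matrix.map_mul]
  rw [h1, Matrix.det_mul, Matrix.det_mul]
  have h2 : (D.map C).det * (D.map C).det = 1 := by
    rw [← Matrix.det_mul, hDC, Matrix.det_one]
  calc (D.map ⇑C).det * (charmatrix N).det * (D.map ⇑C).det
      = ((D.map ⇑C).det * (D.map ⇑C).det) * (charmatrix N).det := by ring
    _ = (charmatrix N).det := by rw [h2, one_mul]

def piF (m : ℕ) (i : Fin m) : Fin m :=
  if i.val = 0 then ⟨m - 2, by have := i.isLt; omega⟩
  else if i.val = m - 1 then i else ⟨i.val - 1, by have := i.isLt; omega⟩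

lemma piF_injective (m : ℕ) : Function.Injective (piF m) := by
  intro a b hab
  have ha := a.isLt; have hb := b.isLt
  unfold piF at hab
  have h := congrArg Fin.val hab
  ext
  split_ifs at h <;> simp_all <;> omega

lemma RS_eq (m : ℕ) (hm : 3 ≤ m) :
    RS m = Matrix.of (fun i j =>
      (if i.val = 0 then (-1:ℚ) else 1) * (if j.val = 0 then (-1:ℚ) else 1) *
        Ts m (piF m i) (piF m j)) := by
  ext i j
  have hi := i.isLt; have hj := j.isLt
  simp only [RS, RA, Ts, condT, piF, Matrix.sub_apply, Matrix.transpose_apply,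
    Matrix.of_apply]
  split_ifs
  all_goals try simp only [Fin.val_mk] at *
  all_goals try omega
  all_goals norm_num

lemma charpoly_RS_eq_Ts (m : ℕ) (hm : 3 ≤ m) : (RS m).charpoly = (Ts m).charpoly := by
  set ε : Fin m → ℚ := fun i => if i.val = 0 then (-1:ℚ) else 1 with hε
  have hDD : diagonal ε * diagonal ε = 1 := by
    rw [Matrix.diagonal_mul_diagonal]
    ext i j
    rcases eq_or_ne i j with rfl | hne
    · simp only [Matrix.diagonal_apply_eq, Matrix.one_apply_eq, Pi.mul_apply, hε]
      split_ifs <;> norm_num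
    · simp [Matrix.diagonal_apply_ne _ hne, Matrix.one_apply_ne hne]
  have hRS : RS m = diagonal ε * ((Ts m).submatrix (piF m) (piF m)) * diagonal ε := by
    rw [RS_eq m hm]
    ext i j
    simp only [Matrix.mul_diagonal, Matrix.diagonal_mul, Matrix.submatrix_apply,
      Matrix.of_apply, hε]
    ring
  let e : Fin m ≃ Fin m :=
    Equiv.ofBijective (piF m) (Finite.injective_iff_bijective.mp (piF_injective m))
  have hsub : (Ts m).submatrix (piF m) (piF m) = reindex e.symm e.symm (Ts m) := by
    rw [Matrix.reindex_apply, Equiv.symm_symm]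
    rfl
  rw [hRS, charpoly_conj_invol _ _ hDD, hsub, Matrix.charpoly_reindex]

lemma smono_nat {q p : ℕ} (f : Fin q → Fin p) (hf : StrictMono f) :
    ∀ d (a b : Fin q), b.val = a.val + d → (f a).val + d ≤ (f b).val := by
  intro d
  induction d with
  | zero =>
    intro a b hab
    have h : a = b := Fin.ext (by omega)
    rw [h]; omega
  | succ d ih =>
    intro a b hab
    have hbm : a.val + d < q := by have := b.isLt; omega
    have h1 := ih a ⟨a.val + d, hbm⟩ rfl
    have hlt : (⟨a.val + d, hbm⟩ : Fin q) < b := by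
      simp only [Fin.lt_def, Fin.val_mk]; omega
    have h2 := hf hlt
    simp only [Fin.lt_def, Fin.val_mk] at h2
    omega

lemma exists_v (m : ℕ) (hm : 1 ≤ m) (f : Fin m → Fin (m+1)) (hf : StrictMono f) :
    ∃ v ≤ m, ∀ k : Fin m, (f k).val = if k.val < v then k.val else k.val + 1 := by
  have hlow : ∀ k : Fin m, k.val ≤ (f k).val := by
    intro k
    have := smono_nat f hf k.val ⟨0, by omega⟩ k (by simp)
    omega
  have hhigh : ∀ k : Fin m, (f k).val ≤ k.val + 1 := by
    intro k
    have hk := k.isLt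
    have := smono_nat f hf (m - 1 - k.val) k ⟨m-1, by omega⟩ (by simp; omega)
    have := (f ⟨m-1, by omega⟩).isLt
    omega
  by_cases hex : ∃ k : Fin m, (f k).val = k.val + 1
  · classical
    have hP : ∃ v, ∃ h : v < m, (f ⟨v, h⟩).val = v + 1 := by
      obtain ⟨k, hk⟩ := hex
      exact ⟨k.val, k.isLt, by rwa [Fin.eta]⟩
    refine ⟨Nat.find hP, by have := (Nat.find_spec hP).1; omega, ?_⟩
    intro k
    by_cases hk : k.val < Nat.find hP
    · rw [if_pos hk]
      have hnot := Nat.find_min hP hk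
      push_neg at hnot
      have := hnot k.isLt
      rw [Fin.eta] at this
      have := hlow k; have := hhigh k
      omega
    · rw [if_neg hk]
      push_neg at hk
      obtain ⟨hv, hfv⟩ := Nat.find_spec hP
      have := smono_nat f hf (k.val - Nat.find hP) ⟨Nat.find hP, hv⟩ k (by simp; omega)
      have := hhigh k
      omega
  · push_neg at hex
    refine ⟨m, le_refl m, fun k => ?_⟩
    rw [if_pos k.isLt]
    have := hex k; have := hlow k; have := hhigh k
    omega

lemma sub_eq (m : ℕ) (hm : 3 ≤ m) (f : Fin m → Fin (m+1)) (v : ℕ) (hvm : v ≤ m)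
    (hfv : ∀ k : Fin m, (f k).val = if k.val < v then k.val else k.val + 1) :
    (RS (m+1)).submatrix f f = Ts m ∨ (RS (m+1)).submatrix f f = RS m := by
  by_cases hv0 : v = 0 ∨ v = m
  · left
    ext i j
    have hi := i.isLt; have hj := j.isLt
    simp only [RS, RA, Ts, condT, Matrix.submatrix_apply, Matrix.sub_apply,
      Matrix.transpose_apply, Matrix.of_apply]
    simp only [hfv i, hfv j]
    split_ifs
    all_goals try omega
    all_goals try norm_num
    all_goals simp_all
    all_goals try omega
  · right
    push_neg at hv0
    ext i j
    have hi := i.isLt; have hj := j.isLt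
    simp only [RS, RA, Ts, condT, Matrix.submatrix_apply, Matrix.sub_apply,
      Matrix.transpose_apply, Matrix.of_apply]
    simp only [hfv i, hfv j]
    split_ifs
    all_goals try omega
    all_goals try norm_num
    all_goals simp_all
    all_goals try omega

lemma key (m : ℕ) (hm : 3 ≤ m) (f : Fin m → Fin (m+1)) (hf : Function.Injective f) :
    ((RS (m+1)).submatrix f f).charpoly = (Ts m).charpoly := by
  set σ := Tuple.sort f with hσ
  have hmono : Monotone (f ∘ σ) := Tuple.monotone_sort f
  have hinj2 : Function.Injective (f ∘ σ) := hf.comp σ.injective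
  have hsm : StrictMono (f ∘ σ) := hmono.strictMono_of_injective hinj2
  obtain ⟨v, hvm, hfv⟩ := exists_v m (by omega) _ hsm
  have h1 : ((RS (m+1)).submatrix (f ∘ ⇑σ) (f ∘ ⇑σ)).charpoly
      = ((RS (m+1)).submatrix f f).charpoly := by
    have h2 : (RS (m+1)).submatrix (f ∘ ⇑σ) (f ∘ ⇑σ)
        = reindex σ.symm σ.symm ((RS (m+1)).submatrix f f) := by
      rw [Matrix.reindex_apply, Equiv.symm_symm, Matrix.submatrix_submatrix]
    rw [h2, Matrix.charpoly_reindex]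
  rcases sub_eq m hm _ v hvm hfv with h | h
  · rw [← h1, h]
  · rw [← h1, h, charpoly_RS_eq_Ts m hm]

theorem stmt_16 (n : ℕ) (hn : 4 ≤ n) (A : Matrix (Fin n) (Fin n) ℚ)
    (hA : ∀ i j : Fin n,
      A i j = if (i.val < j.val ∧ ¬(i.val = 0 ∧ j.val = n - 1)) ∨
          (i.val = n - 1 ∧ j.val = 0) then 1 else 0) :
    SkewSpecMono (n - 1) A ∧ ¬ SpecMono (n - 1) A := by
  obtain ⟨m, rfl⟩ : ∃ m, n = m + 1 := ⟨n - 1, by omega⟩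
  have hm : 3 ≤ m := by omega
  have hAeq : A = RA (m+1) := by
    ext i j
    rw [hA i j]
    simp only [RA, Matrix.of_apply, condT]
  have hskew : A - Aᵀ = RS (m+1) := by rw [hAeq]; rfl
  have hm1 : m + 1 - 1 = m := rfl
  constructor
  · intro f g hfi hgi
    rw [hskew]
    rw [key m hm f hfi, key m hm g hgi]
  · intro hS
    -- the two submatrices
    set f₀ : Fin m → Fin (m+1) := Fin.succ with hf₀
    set g₀ : Fin m → Fin (m+1) :=
      (fun k => ⟨if k.val = 0 then 0 else k.val + 1, by split_ifs <;> omega⟩) with hg₀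
    have hf₀i : Function.Injective f₀ := Fin.succ_injective m
    have hg₀i : Function.Injective g₀ := by
      intro a b hab
      have h := congrArg Fin.val hab
      simp only [hg₀] at h
      ext
      split_ifs at h <;> omega
    have hB : A.submatrix f₀ f₀ = Matrix.of (fun i j : Fin m =>
        if i.val < j.val then (1:ℚ) else 0) := by
      ext i j
      have hi := i.isLt; have hj := j.isLt
      simp only [hAeq, RA, condT, Matrix.submatrix_apply, Matrix.of_apply, hf₀,
        Fin.val_succ]
      split_ifs
      all_goals try rfl
      all_goals exfalso
      all_goals try simp only [false_and, and_false, not_false_eq_true, and_true,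
        or_false, true_and, false_or, not_true] at *
      all_goals omega
    have hBcp : (A.submatrix f₀ f₀).charpoly = X ^ m := by
      rw [hB]
      have htri : (Matrix.of (fun i j : Fin m =>
          if i.val < j.val then (1:ℚ) else 0)).BlockTriangular id := by
        intro i j hij
        simp only [Matrix.of_apply, id_eq] at *
        rw [if_neg (by omega)]
      rw [Matrix.charpoly_of_upperTriangular _ htri]
      simp
    have hM : A.submatrix g₀ g₀ = RA m := by
      ext i j
      have hi := i.isLt; have hj := j.isLt
      simp only [hAeq, RA, condT, Matrix.submatrix_apply, Matrix.of_apply, hg₀,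
        Fin.val_mk]
      split_ifs
      all_goals try rfl
      all_goals exfalso
      all_goals try simp only [false_and, and_false, not_false_eq_true, and_true,
        or_false, true_and, false_or, not_true] at *
      all_goals omega
    have hMcp : (RA m).charpoly = X ^ m := by
      rw [← hM, hS g₀ f₀ hg₀i hf₀i, hBcp]
    -- Cayley-Hamilton gives nilpotency
    have hCH := Matrix.aeval_self_charpoly (RA m)
    rw [hMcp] at hCH
    simp only [map_pow, aeval_X] at hCH
    have hnil : IsNilpotent ((RA m) ^ 3) := by
      refine ⟨m, ?_⟩
      rw [← pow_mul, mul_comm, pow_mul, hCH, zero_pow (by omega)]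
    have htr0 : Matrix.trace ((RA m) ^ 3) = 0 :=
      (Matrix.isNilpotent_trace_of_isNilpotent hnil).eq_zero
    -- but the trace is at least 1
    have hnn : ∀ i j, 0 ≤ RA m i j := by
      intro i j
      simp only [RA, Matrix.of_apply]
      split_ifs <;> norm_num
    have hnn2 : ∀ i j, 0 ≤ ((RA m) ^ 2) i j := by
      intro i j
      rw [pow_two, Matrix.mul_apply]
      exact Finset.sum_nonneg fun k _ => mul_nonneg (hnn i k) (hnn k j)
    obtain ⟨i0, hi0⟩ : ∃ i : Fin m, i.val = 0 := ⟨⟨0, by omega⟩, rfl⟩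
    obtain ⟨i1, hi1⟩ : ∃ i : Fin m, i.val = 1 := ⟨⟨1, by omega⟩, rfl⟩
    obtain ⟨il, hil⟩ : ∃ i : Fin m, i.val = m - 1 := ⟨⟨m - 1, by omega⟩, rfl⟩
    have e01 : RA m i0 i1 = 1 := by
      simp only [RA, Matrix.of_apply]
      rw [if_pos (by simp only [condT]; omega)]
    have e1l : RA m i1 il = 1 := by
      simp only [RA, Matrix.of_apply]
      rw [if_pos (by simp only [condT]; omega)]
    have el0 : RA m il i0 = 1 := by
      simp only [RA, Matrix.of_apply]
      rw [if_pos (by simp only [condT]; omega)]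
    have h2 : 1 ≤ ((RA m) ^ 2) i1 i0 := by
      rw [pow_two, Matrix.mul_apply]
      calc (1:ℚ) = RA m i1 il * RA m il i0 := by rw [e1l, el0]; norm_num
        _ ≤ ∑ k, RA m i1 k * RA m k i0 :=
          Finset.single_le_sum (fun k _ => mul_nonneg (hnn i1 k) (hnn k i0))
            (Finset.mem_univ il)
    have h3 : 1 ≤ ((RA m) ^ 3) i0 i0 := by
      rw [pow_succ' (RA m) 2, Matrix.mul_apply]
      calc (1:ℚ) = 1 * 1 := by norm_num
        _ ≤ RA m i0 i1 * ((RA m) ^ 2) i1 i0 := by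
            rw [e01]; nlinarith [h2]
        _ ≤ ∑ k, RA m i0 k * ((RA m) ^ 2) k i0 :=
          Finset.single_le_sum (fun k _ => mul_nonneg (hnn i0 k) (hnn2 k i0))
            (Finset.mem_univ i1)
    have h4 : 1 ≤ Matrix.trace ((RA m) ^ 3) := by
      have hterm : ∀ k : Fin m, 0 ≤ ((RA m) ^ 3).diag k := by
        intro k
        show 0 ≤ ((RA m) ^ 3) k k
        rw [pow_succ' (RA m) 2, Matrix.mul_apply]
        exact Finset.sum_nonneg fun l _ => mul_nonneg (hnn k l) (hnn2 l k)
      have hsum := Finset.single_le_sum (f := fun k => ((RA m) ^ 3).diag k)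
        (fun k _ => hterm k) (Finset.mem_univ i0)
      rw [Matrix.trace]
      exact le_trans h3 hsum
    rw [htr0] at h4
    norm_num at h4
end

section
/- A regular n-tournament is (n−1)-spectrally monomorphic if and only if it is (n−1)-skew-spectrally monomorphic. -/
open Polynomial Matrix

lemma eval_charpoly'_s17 {m : ℕ} (M : Matrix (Fin m) (Fin m) ℚ) (x : ℚ) :
    (M.charpoly).eval x = (x • (1 : Matrix (Fin m) (Fin m) ℚ) - M).det := by
  rw [Matrix.charpoly, ← coe_evalRingHom, RingHom.map_det]
  congr 1
  ext i j
  by_cases h : i = j <;>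
    simp [charmatrix_apply, Matrix.one_apply, h, Matrix.smul_apply, Matrix.sub_apply,
      Matrix.diagonal_apply]

lemma minor_det {n : ℕ} (M : Matrix (Fin n) (Fin n) ℚ)
    (f : Fin (n-1) → Fin n) (hf : Function.Injective f) (k : Fin n) (hk : ∀ a, f a ≠ k) :
    (M.submatrix f f).det = M.adjugate k k := by
  have hpos : 0 < n := k.pos
  have hbij : Function.Bijective (Sum.elim f (fun _ : Unit => k)) := by
    rw [Fintype.bijective_iff_injective_and_card]
    constructor
    · rintro (a | a) (b | b) h <;> simp at h
      · exact congrArg Sum.inl (hf h)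
      · exact absurd h (hk a)
      · exact absurd h.symm (hk b)
      · rfl
    · simp; omega
  let e : (Fin (n-1) ⊕ Unit) ≃ Fin n := Equiv.ofBijective _ hbij
  have he1 : ∀ a, e (Sum.inl a) = f a := fun a => rfl
  have he2 : e (Sum.inr ()) = k := rfl
  rw [Matrix.adjugate_apply, ← Matrix.det_submatrix_equiv_self e]
  have : (M.updateRow k (Pi.single k 1)).submatrix e e =
      Matrix.fromBlocks (M.submatrix f f) (Matrix.of fun a (_ : Unit) => M (f a) k) 0 1 := by
    ext (a | a) (b | b) <;>
      simp [Matrix.submatrix, he1, he2, Matrix.updateRow_apply, Matrix.fromBlocks,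
        Pi.single_apply, hk, (hk _).symm, Ne.symm (hk _)]
  rw [this, Matrix.det_fromBlocks_zero₂₁]
  simp

lemma missing_vertex {n : ℕ} (hn : 1 ≤ n) (f : Fin (n-1) → Fin n)
    (hf : Function.Injective f) : ∃ k : Fin n, ∀ a, f a ≠ k := by
  by_contra h
  push_neg at h
  have hsurj : Function.Surjective f := fun k => by
    obtain ⟨a, ha⟩ := h k; exact ⟨a, ha⟩
  have := Fintype.card_le_of_surjective f hsurj
  simp at this; omega

lemma charpoly_skew_key {n : ℕ} (A : Matrix (Fin n) (Fin n) ℚ) (hn : 1 ≤ n)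
    (hT : (∀ i j, A i j = 0 ∨ A i j = 1) ∧ (∀ i, A i i = 0) ∧
      A + Aᵀ = Matrix.of (fun _ _ => (1 : ℚ)) - 1)
    (hR : ∀ i, ∑ j, A i j = ((n : ℚ) - 1) / 2) (y : ℚ)
    (h1 : A.charpoly.eval y ≠ 0) (h2 : y - ((n:ℚ)-1)/2 ≠ 0)
    (h3 : y - ((n:ℚ)-1)/2 + (n:ℚ)/2 ≠ 0) :
    ∃ α β : ℚ, α ≠ 0 ∧ ∀ f : Fin (n-1) → Fin n, Function.Injective f →
      (((A - Aᵀ).submatrix f f).charpoly).eval (2*y+1) =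
        α * ((A.submatrix f f).charpoly).eval y + β := by
  set r : ℚ := ((n:ℚ)-1)/2 with hr
  set J : Matrix (Fin n) (Fin n) ℚ := Matrix.of (fun _ _ => (1:ℚ)) with hJ
  set Y : Matrix (Fin n) (Fin n) ℚ := y • 1 - A with hY
  -- column sums of A
  have hcol : ∀ j, ∑ k, A k j = r := by
    intro j
    have hAT : ∀ k, A k j = (J k j - (1 : Matrix (Fin n) (Fin n) ℚ) k j) - A j k := by
      intro k
      have := congrFun (congrFun hT.2.2 k) j
      simp only [Matrix.add_apply, Matrix.transpose_apply, Matrix.sub_apply] at this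
      linarith
    rw [Finset.sum_congr rfl (fun k _ => hAT k)]
    rw [Finset.sum_sub_distrib, Finset.sum_sub_distrib, hR j]
    simp [hJ, Matrix.one_apply, Finset.sum_ite_eq]
    rw [hr]; ring
  have hdetY : Y.det = A.charpoly.eval y := (eval_charpoly'_s17 A y).symm
  have hYunit : IsUnit Y.det := by rw [hdetY]; exact isUnit_iff_ne_zero.mpr h1
  have hYYinv : Y * Y⁻¹ = 1 := Matrix.mul_nonsing_inv Y hYunit
  have hYinvY : Y⁻¹ * Y = 1 := Matrix.nonsing_inv_mul Y hYunit
  have hJJ : J * J = (n : ℚ) • J := by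
    ext i j; simp [hJ, Matrix.mul_apply]
  have hYJ : Y * J = (y - r) • J := by
    ext i j
    have hsum1 : ∑ k, Y i k = y - r := by
      rw [hY]
      simp [Matrix.sub_apply, Matrix.smul_apply, Matrix.one_apply,
        Finset.sum_sub_distrib, hR i, Finset.sum_ite_eq]
    simp [Matrix.mul_apply, hJ, Matrix.smul_apply, hsum1]
  have hJY : J * Y = (y - r) • J := by
    ext i j
    have hsum2 : ∑ k, Y k j = y - r := by
      rw [hY]
      simp [Matrix.sub_apply, Matrix.smul_apply, Matrix.one_apply,
        Finset.sum_sub_distrib, hcol j, Finset.sum_ite_eq]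
    simp [Matrix.mul_apply, hJ, Matrix.smul_apply, hsum2]
  set c : ℚ := (1/2) / ((y - r) * (y - r + (n:ℚ)/2)) with hc
  have hcval : c * ((y - r) * (y - r + (n:ℚ)/2)) = 1/2 := by
    rw [hc]; exact div_mul_cancel₀ _ (mul_ne_zero h2 h3)
  have hinvval : (y - r)⁻¹ = 2 * c * (y - r + (n:ℚ)/2) :=
    inv_eq_of_mul_eq_one_right (by linear_combination 2 * hcval)
  have hJYinv : J * Y⁻¹ = (2 * c * (y - r + (n:ℚ)/2)) • J := by
    have hstep : (y - r) • (J * Y⁻¹) = J := by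
      rw [← Matrix.smul_mul, ← hJY, Matrix.mul_assoc, hYYinv, Matrix.mul_one]
    calc J * Y⁻¹ = (y-r)⁻¹ • ((y-r) • (J * Y⁻¹)) := by
          rw [smul_smul, inv_mul_cancel₀ h2, one_smul]
      _ = (y-r)⁻¹ • J := by rw [hstep]
      _ = (2 * c * (y - r + (n:ℚ)/2)) • J := by rw [hinvval]
  set N : Matrix (Fin n) (Fin n) ℚ := Y + (1/2 : ℚ) • J with hN
  set Z : Matrix (Fin n) (Fin n) ℚ := Y⁻¹ - c • J with hZ
  have hNZ : N * Z = 1 := by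
    rw [hN, hZ, Matrix.add_mul, Matrix.mul_sub, Matrix.mul_sub, Matrix.mul_smul,
      Matrix.mul_smul, Matrix.smul_mul, Matrix.smul_mul, hYYinv, hYJ, hJYinv, hJJ,
      smul_smul, smul_smul, smul_smul]
    have hz : c * (y - r) + ((1/2) * (c * (n:ℚ)) - (1/2) * (2 * c * (y - r + (n:ℚ)/2))) = 0 := by
      ring
    module
  have hdetN : N.det ≠ 0 := by
    intro h0
    have := congrArg Matrix.det hNZ
    rw [Matrix.det_mul, h0, zero_mul, Matrix.det_one] at this
    exact zero_ne_one this
  have hNinv : N⁻¹ = Z := Matrix.inv_eq_right_inv hNZ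
  have hNunit : IsUnit N.det := isUnit_iff_ne_zero.mpr hdetN
  have hadjN : N.adjugate = N.det • N⁻¹ := by
    calc N.adjugate = (N⁻¹ * N) * N.adjugate := by
          rw [Matrix.nonsing_inv_mul N hNunit, Matrix.one_mul]
      _ = N⁻¹ * (N * N.adjugate) := by rw [Matrix.mul_assoc]
      _ = N⁻¹ * (N.det • 1) := by rw [Matrix.mul_adjugate]
      _ = N.det • N⁻¹ := by rw [Matrix.mul_smul, Matrix.mul_one]
  have hadjY : Y.adjugate = Y.det • Y⁻¹ := by
    calc Y.adjugate = (Y⁻¹ * Y) * Y.adjugate := by rw [hYinvY, Matrix.one_mul]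
      _ = Y⁻¹ * (Y * Y.adjugate) := by rw [Matrix.mul_assoc]
      _ = Y⁻¹ * (Y.det • 1) := by rw [Matrix.mul_adjugate]
      _ = Y.det • Y⁻¹ := by rw [Matrix.mul_smul, Matrix.mul_one]
  refine ⟨2^(n-1) * N.det * (A.charpoly.eval y)⁻¹, -(2^(n-1) * N.det * c), ?_, ?_⟩
  · exact mul_ne_zero (mul_ne_zero (pow_ne_zero _ two_ne_zero) hdetN) (inv_ne_zero h1)
  intro f hf
  obtain ⟨k, hk⟩ := missing_vertex hn f hf
  have hSsub : (2*y+1) • (1 : Matrix (Fin (n-1)) (Fin (n-1)) ℚ) - (A - Aᵀ).submatrix f f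
      = (2:ℚ) • (N.submatrix f f) := by
    ext a b
    have htour := congrFun (congrFun hT.2.2 (f a)) (f b)
    simp only [Matrix.add_apply, Matrix.transpose_apply, Matrix.sub_apply, hJ,
      Matrix.of_apply] at htour
    by_cases hab : a = b
    · subst hab
      have hz := hT.2.1 (f a)
      simp only [Matrix.smul_apply, Matrix.sub_apply, Matrix.submatrix_apply,
        Matrix.one_apply_eq, Matrix.transpose_apply, hN, hY, hJ, Matrix.add_apply,
        Matrix.of_apply, smul_eq_mul, hz]
      ring
    · have hfab : f a ≠ f b := fun h => hab (hf h)
      rw [Matrix.one_apply_ne hfab] at htour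
      simp only [Matrix.smul_apply, Matrix.sub_apply, Matrix.submatrix_apply,
        Matrix.one_apply_ne hab, Matrix.transpose_apply, hN, hY, hJ, Matrix.add_apply,
        Matrix.of_apply, smul_eq_mul, Matrix.one_apply_ne hfab]
      linarith
  have hYsub : Y.submatrix f f
      = y • (1 : Matrix (Fin (n-1)) (Fin (n-1)) ℚ) - A.submatrix f f := by
    ext a b
    by_cases hab : a = b
    · subst hab; simp [hY, Matrix.one_apply]
    · have hfab : f a ≠ f b := fun h => hab (hf h)
      simp [hY, Matrix.one_apply_ne hab, Matrix.one_apply_ne hfab]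
  have step1 : (((A - Aᵀ).submatrix f f).charpoly).eval (2*y+1)
      = 2^(n-1) * (N.submatrix f f).det := by
    rw [eval_charpoly'_s17, hSsub, Matrix.det_smul]
    simp
  have step2 : (N.submatrix f f).det = N.adjugate k k := minor_det N f hf k hk
  have step3 : N.adjugate k k = N.det * (Y⁻¹ k k - c) := by
    have := congrFun (congrFun hadjN k) k
    rw [hNinv] at this
    simp only [Matrix.smul_apply, smul_eq_mul, hZ, Matrix.sub_apply, hJ,
      Matrix.of_apply] at this
    rw [this]
    ring
  have h5 : Y.adjugate k k = ((A.submatrix f f).charpoly).eval y := by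
    rw [← minor_det Y f hf k hk, eval_charpoly'_s17, hYsub]
  have step4 : Y⁻¹ k k = (A.charpoly.eval y)⁻¹ * ((A.submatrix f f).charpoly).eval y := by
    have h6 := congrFun (congrFun hadjY k) k
    simp only [Matrix.smul_apply, smul_eq_mul] at h6
    rw [hdetY, h5] at h6
    rw [h6, ← mul_assoc, inv_mul_cancel₀ h1, one_mul]
  rw [step1, step2, step3, step4]
  ring

theorem stmt_17 (n : ℕ) (A : Matrix (Fin n) (Fin n) ℚ)
    (hT : IsTournament A) (hR : IsRegularTournament A) :
    SpecMono (n - 1) A ↔ SkewSpecMono (n - 1) A := by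
  rcases Nat.eq_zero_or_pos n with hn0 | hn
  · constructor <;> intro _ f g hf hg <;>
      · congr 1
        ext a b
        exact absurd a.isLt (by omega)
  -- main case
  have hp : A.charpoly ≠ 0 := (Matrix.charpoly_monic A).ne_zero
  set r : ℚ := ((n:ℚ)-1)/2 with hr
  set Good : Set ℚ :=
    {y | A.charpoly.eval y ≠ 0 ∧ y - r ≠ 0 ∧ y - r + (n:ℚ)/2 ≠ 0} with hGoodDef
  have hGood : Good.Infinite := by
    have hsub : Goodᶜ ⊆ {y | A.charpoly.IsRoot y} ∪ {r} ∪ {r - (n:ℚ)/2} := by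
      intro y hy
      simp only [hGoodDef, Set.mem_compl_iff, Set.mem_setOf_eq, not_and_or, not_not] at hy
      rcases hy with h | h | h
      · exact Or.inl (Or.inl h)
      · exact Or.inl (Or.inr (by simpa [sub_eq_zero] using h))
      · refine Or.inr ?_
        simp only [Set.mem_singleton_iff]
        linarith [h]
    have hfin : (Goodᶜ).Finite :=
      Set.Finite.subset (((Polynomial.finite_setOf_isRoot hp).union
        (Set.finite_singleton r)).union (Set.finite_singleton (r - (n:ℚ)/2))) hsub
    have := hfin.infinite_compl
    rwa [compl_compl] at this
  constructor
  · intro hA f g hf hg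
    apply Polynomial.eq_of_infinite_eval_eq
    apply Set.Infinite.mono ?_ (hGood.image (fun a _ b _ h => by dsimp at h; linarith :
      Set.InjOn (fun y : ℚ => 2*y+1) Good))
    rintro x ⟨y, hy, rfl⟩
    obtain ⟨α, β, hα, hkey⟩ := charpoly_skew_key A hn hT hR y hy.1 hy.2.1 hy.2.2
    simp only [Set.mem_setOf_eq]
    rw [hkey f hf, hkey g hg, hA f g hf hg]
  · intro hS f g hf hg
    apply Polynomial.eq_of_infinite_eval_eq
    apply Set.Infinite.mono ?_ hGood
    intro y hy
    obtain ⟨α, β, hα, hkey⟩ := charpoly_skew_key A hn hT hR y hy.1 hy.2.1 hy.2.2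
    have h1 := hkey f hf
    have h2 := hkey g hg
    rw [hS f g hf hg] at h1
    simp only [Set.mem_setOf_eq]
    have := h1.symm.trans h2
    have h3 : α * ((A.submatrix f f).charpoly).eval y
        = α * ((A.submatrix g g).charpoly).eval y := by linarith
    exact mul_left_cancel₀ hα h3
end
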